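/- Let (A,+) be a cancellative monoid, X ⊆ A, and z an invertible element of A lying in the center of X (i.e., x + z = z + x for all x ∈ X). Then −z also lies in the center of X, and if the subsemigroup ⟨X⟩ generated by X is commutative, then so are ⟨X − z⟩ and ⟨−z + X⟩, where X − z := {x + (−z) : x ∈ X}. -/

import Mathlib

open scoped Pointwise Classical
open AddSubsemigroup

namespace CD

variable {A : Type*} [AddSemigroup A]

/-- An element `z` is cancellable if both translation maps are injective. -/
def Cancellable (z : A) : Prop :=
  Function.Injective (fun x : A => x + z) ∧ Function.Injective (fun x : A => z + x)

/-- `e` is a two-sided identity of the semigroup. -/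
def IsIdentity (e : A) : Prop := ∀ x : A, x + e = x ∧ e + x = x

/-- `u` is a unit: there is a two-sided identity and a two-sided inverse of `u`. -/
def IsUnitElem (u : A) : Prop := ∃ e v : A, IsIdentity e ∧ u + v = e ∧ v + u = e

/-- The inverse of a unit (junk value otherwise). -/
noncomputable def neg (u : A) : A :=
  if h : IsUnitElem u then h.choose_spec.choose else u

/-- `ord a` is the cardinality of the subsemigroup generated by `a`. -/
noncomputable def ord (a : A) : ℕ∞ := (closure {a} : Set A).encard

/-- The units of `A` lying in `W`. -/
def unitsIn (W : Set A) : Set A := {w ∈ W | IsUnitElem w}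

/-- A set is commutative if its elements pairwise commute. -/
def CommOn (S : Set A) : Prop := ∀ a ∈ S, ∀ b ∈ S, a + b = b + a

/-- The Cauchy-Davenport constant of a set. -/
noncomputable def gamma (X : Set A) : ℕ∞ :=
  if X.encard ≤ 1 then X.encard
  else ⨆ x₀ ∈ unitsIn X, ⨅ x ∈ {x ∈ X | x ≠ x₀}, ord (x + neg x₀)

/-- The sumset `X 0 + X 1 + ⋯ + X n` of a tuple of sets. -/
def sumsetTup : (n : ℕ) → (Fin (n + 1) → Set A) → Set A
  | 0, X => X 0
  | n + 1, X => sumsetTup n (fun i => X i.castSucc) + X (Fin.last (n + 1))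

/-- The sum `x 0 + x 1 + ⋯ + x n` of a tuple of elements. -/
def sumTup : (n : ℕ) → (Fin (n + 1) → A) → A
  | 0, x => x 0
  | n + 1, x => sumTup n (fun i => x i.castSucc) + x (Fin.last (n + 1))

/-- `nfold n a` is the `(n+1)`-fold sum `a + a + ⋯ + a`. -/
def nfold : ℕ → A → A
  | 0, a => a
  | n + 1, a => nfold n a + a

/-- `⟨⟨W⟩⟩`, the subsemigroup generated by `W` together with the inverses of its units. -/
noncomputable def dclosure (W : Set A) : Set A :=
  (closure (W ∪ neg '' unitsIn W) : Set A)

/-- `Ỹ_z = {y ∈ Y : z ∈ X + Y + y}`. -/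
noncomputable def Ytil (X Y : Set A) (z : A) : Set A := {y ∈ Y | z ∈ X + Y + {y}}

/-- `z − W = {w : z ∈ w + W}`. -/
def subFrom (z : A) (W : Set A) : Set A := {w : A | ∃ u ∈ W, w + u = z}

end CD

open CD

lemma commOn_closure {A : Type*} [AddSemigroup A] {S : Set A} (h : CommOn S) :
    CommOn (closure S : Set A) := by
  intro a ha b hb
  induction ha using closure_induction with
  | mem x hx =>
    induction hb using closure_induction with
    | mem y hy => exact h x hx y hy
    | add y z _ _ hy hz => rw [← add_assoc, hy, add_assoc, hz, ← add_assoc]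
  | add x y _ _ hx hy => rw [add_assoc, hy, ← add_assoc, hx, add_assoc]

lemma neg_spec {A : Type*} [AddMonoid A] {z : A} (hz : IsUnitElem z) :
    z + neg z = 0 ∧ neg z + z = 0 := by
  rw [neg, dif_pos hz]
  obtain ⟨hid, h1, h2⟩ := hz.choose_spec.choose_spec
  have he : hz.choose = 0 := by
    have := (hid 0).1
    rwa [zero_add] at this
  exact ⟨h1.trans he, h2.trans he⟩


theorem stmt3 {A : Type*} [AddMonoid A] [IsCancelAdd A] (X : Set A) (z : A)
    (hz : IsUnitElem z) (hc : ∀ x ∈ X, x + z = z + x) :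
    (∀ x ∈ X, x + neg z = neg z + x) ∧
    (CommOn (AddSubsemigroup.closure X : Set A) →
      CommOn (AddSubsemigroup.closure ((fun x => x + neg z) '' X) : Set A) ∧
      CommOn (AddSubsemigroup.closure ((fun x => neg z + x) '' X) : Set A)) := by
  obtain ⟨h1, h2⟩ := neg_spec hz
  have key : ∀ x ∈ X, x + neg z = neg z + x := by
    intro x hx
    have : neg z + x = neg z + x + (z + neg z) := by rw [h1, add_zero]
    rw [add_assoc, ← add_assoc x, hc x hx, ← add_assoc, ← add_assoc, h2, zero_add] at this
    exact this.symm
  refine ⟨key, fun hcomm => ⟨?_, ?_⟩⟩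
  · apply commOn_closure
    rintro _ ⟨x, hx, rfl⟩ _ ⟨y, hy, rfl⟩
    have hxy : x + y = y + x :=
      hcomm x (subset_closure hx) y (subset_closure hy)
    simp only
    calc x + neg z + (y + neg z) = x + (neg z + y) + neg z := by
          simp [add_assoc]
      _ = x + (y + neg z) + neg z := by rw [key y hy]
      _ = (x + y) + (neg z + neg z) := by simp [add_assoc]
      _ = (y + x) + (neg z + neg z) := by rw [hxy]
      _ = y + (x + neg z) + neg z := by simp [add_assoc]
      _ = y + (neg z + x) + neg z := by rw [key x hx]
      _ = y + neg z + (x + neg z) := by simp [add_assoc]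
  · apply commOn_closure
    rintro _ ⟨x, hx, rfl⟩ _ ⟨y, hy, rfl⟩
    have hxy : x + y = y + x :=
      hcomm x (subset_closure hx) y (subset_closure hy)
    simp only
    calc neg z + x + (neg z + y) = neg z + (x + neg z) + y := by simp [add_assoc]
      _ = neg z + (neg z + x) + y := by rw [key x hx]
      _ = (neg z + neg z) + (x + y) := by simp [add_assoc]
      _ = (neg z + neg z) + (y + x) := by rw [hxy]
      _ = neg z + (neg z + y) + x := by simp [add_assoc]
      _ = neg z + (y + neg z) + x := by rw [key y hy]
      _ = neg z + y + (neg z + x) := by simp [add_assoc]
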